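/- The multivariate Krawtchouk polynomials satisfy the dual orthogonality relation: ∑_{n : |n| ≤ N} multinomial(N; n^+)^{-1} ∏_{j=1}^{d-1} a_j^{-n_j} Q_n(x;u) Q_n(y;u) = δ_{xy} m(x;p)^{-1} for all x, y with |x| = |y| = N. -/

import Mathlib

open MvPolynomial
open Finset

/-- Multinomial probability `m(x;p)` (when `|x| = N`). -/
noncomputable def multinomialPMF (d : ℕ) (p : Fin d → ℝ) (x : Fin d → ℕ) : ℝ :=
  (Nat.multinomial Finset.univ x : ℝ) * ∏ j, p j ^ x j

/-- Multivariate Krawtchouk polynomial `Q_n(x;u)`. -/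
noncomputable def QK (d : ℕ) [NeZero d] (u : Fin d → Fin d → ℝ) (n x : Fin d → ℕ) : ℝ :=
  MvPolynomial.coeff (Finsupp.equivFunOnFinite.symm n)
    (∏ j, (1 + ∑ l ∈ Finset.univ.erase 0, MvPolynomial.X l * MvPolynomial.C (u l j)) ^ x j)

namespace MKDual

lemma prod_X_pow {σ A : Type*} [CommSemiring A] (s : Finset σ) (k : σ → ℕ) :
    ∏ l ∈ s, (X l : MvPolynomial σ A) ^ k l
      = monomial (∑ l ∈ s, Finsupp.single l (k l)) 1 := by
  classical
  induction s using Finset.cons_induction with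
  | empty => simp [monomial_zero', map_one]
  | cons i s hi ih =>
      rw [Finset.prod_cons, Finset.sum_cons, ih, X_pow_eq_monomial, monomial_mul, one_mul]

lemma sum_single_apply {d : ℕ} (s : Finset (Fin d)) (k : Fin d → ℕ) (j : Fin d) :
    (∑ l ∈ s, Finsupp.single l (k l)) j = if j ∈ s then k j else 0 := by
  rw [Finsupp.finset_sum_apply]
  simp_rw [Finsupp.single_apply]
  exact Finset.sum_ite_eq' s j (fun l => k l)

lemma match_iff {d : ℕ} [NeZero d] (n k : Fin d → ℕ) (hn0 : n 0 = 0) :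
    Finsupp.equivFunOnFinite.symm n = ∑ l ∈ Finset.univ.erase 0, Finsupp.single l (k l)
      ↔ ∀ l ∈ Finset.univ.erase (0 : Fin d), n l = k l := by
  rw [Finsupp.ext_iff]
  constructor
  · intro h l hl
    have := h l
    rwa [Finsupp.equivFunOnFinite_symm_apply_apply, sum_single_apply, if_pos hl] at this
  · intro h j
    rw [Finsupp.equivFunOnFinite_symm_apply_apply, sum_single_apply]
    by_cases hj : j ∈ Finset.univ.erase (0 : Fin d)
    · rw [if_pos hj]; exact h j hj
    · rw [if_neg hj]
      have : j = 0 := by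
        by_contra hne
        exact hj (Finset.mem_erase.2 ⟨hne, Finset.mem_univ j⟩)
      rw [this, hn0]

lemma sum_erase_eq {d : ℕ} [NeZero d] (n : Fin d → ℕ) (hn0 : n 0 = 0) :
    ∑ l ∈ Finset.univ.erase (0 : Fin d), n l = ∑ l, n l := by
  rw [← Finset.sum_erase_add _ _ (Finset.mem_univ (0 : Fin d)), hn0, add_zero]

variable (d : ℕ) [NeZero d]

noncomputable def Pu (u : Fin d → Fin d → ℝ) (j : Fin d) : MvPolynomial (Fin d) ℝ :=
  1 + ∑ l ∈ Finset.univ.erase 0, X l * C (u l j)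

lemma QK_eq (u : Fin d → Fin d → ℝ) (n x : Fin d → ℕ) :
    QK d u n x = coeff (Finsupp.equivFunOnFinite.symm n) (∏ j, Pu d u j ^ x j) := rfl

noncomputable def Gj (u : Fin d → Fin d → ℝ) (j : Fin d) :
    MvPolynomial (Fin d) (MvPolynomial (Fin d) ℝ) :=
  (map C (Pu d u j)) * C (Pu d u j)

noncomputable def msum (k : Fin d → ℕ) : Fin d →₀ ℕ :=
  ∑ l ∈ Finset.univ.erase 0, Finsupp.single l (k l)

variable (u : Fin d → Fin d → ℝ) (p a : Fin d → ℝ)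

lemma Pu_sum (hu0 : ∀ j, u 0 j = 1) (j : Fin d) :
    Pu d u j = ∑ l, (if l = 0 then 1 else X l) * C (u l j) := by
  rw [Pu, ← Finset.sum_erase_add _ _ (Finset.mem_univ (0 : Fin d)), if_pos rfl, hu0,
    map_one, one_mul, add_comm]
  congr 1
  refine Finset.sum_congr rfl fun l hl => ?_
  rw [if_neg (Finset.ne_of_mem_erase hl)]

lemma base_eq (hu0 : ∀ j, u 0 j = 1) (hpsum : ∑ j, p j = 1)
    (horth : ∀ l m, ∑ i, u l i * u m i * p i = if l = m then a l else 0) :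
    ∑ j, C (C (p j)) * Gj d u j
      = ∑ l, (if l = 0 then 1 else X l * C (X l) * C (C (a l))) := by
  have ha0 : a 0 = 1 := by
    have h := horth 0 0
    simp only [if_true, eq_self_iff_true] at h
    rw [← h, ← hpsum]
    exact (Finset.sum_congr rfl fun i _ => by rw [hu0]; ring).symm
  calc ∑ j, C (C (p j)) * Gj d u j
      = ∑ j, ∑ l, ∑ m, ((if l = 0 then 1 else X l) * C (if m = 0 then 1 else X m))
            * C (C (u l j * u m j * p j)) := by
        refine Finset.sum_congr rfl fun j _ => ?_
        rw [Gj, Pu_sum d u hu0, map_sum, map_sum, Finset.sum_mul_sum, Finset.mul_sum]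
        refine Finset.sum_congr rfl fun l _ => ?_
        rw [Finset.mul_sum]
        refine Finset.sum_congr rfl fun m _ => ?_
        simp only [map_mul, map_X, map_C, map_one,
          apply_ite (map (C : ℝ →+* MvPolynomial (Fin d) ℝ)),
          apply_ite (C : MvPolynomial (Fin d) ℝ →+* MvPolynomial (Fin d) (MvPolynomial (Fin d) ℝ)),
          map_one]
        ring
    _ = ∑ l, ∑ m, ((if l = 0 then 1 else X l) * C (if m = 0 then 1 else X m))
            * C (C (∑ j, u l j * u m j * p j)) := by
        rw [Finset.sum_comm]
        refine Finset.sum_congr rfl fun l _ => ?_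
        rw [Finset.sum_comm]
        refine Finset.sum_congr rfl fun m _ => ?_
        rw [← Finset.mul_sum, ← map_sum, ← map_sum]
    _ = ∑ l, (if l = 0 then 1 else X l * C (X l) * C (C (a l))) := by
        refine Finset.sum_congr rfl fun l _ => ?_
        simp only [horth, apply_ite (C : ℝ →+* MvPolynomial (Fin d) ℝ),
          apply_ite (C : MvPolynomial (Fin d) ℝ →+* MvPolynomial (Fin d) (MvPolynomial (Fin d) ℝ)),
          map_zero, mul_ite, mul_zero]
        rw [Finset.sum_ite_eq]
        simp only [Finset.mem_univ, if_true]
        by_cases hl : l = 0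
        · subst hl; simp [ha0]
        · rw [if_neg hl, if_neg hl, if_neg hl]

lemma term_coeff (x n m : Fin d → ℕ) :
    coeff (Finsupp.equivFunOnFinite.symm m) (coeff (Finsupp.equivFunOnFinite.symm n)
        (∏ j, (C (C (p j)) * Gj d u j) ^ x j))
      = (∏ j, p j ^ x j) * (QK d u n x * QK d u m x) := by
  have h1 : ∏ j, (C (C (p j)) * Gj d u j) ^ x j
      = C (C (∏ j, p j ^ x j) * ∏ j, Pu d u j ^ x j)
          * map (C : ℝ →+* MvPolynomial (Fin d) ℝ) (∏ j, Pu d u j ^ x j) := by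
    simp only [Gj, mul_pow, Finset.prod_mul_distrib, map_mul, map_prod, map_pow]
    ring
  rw [h1, coeff_C_mul, coeff_map]
  rw [mul_comm (C (∏ j, p j ^ x j)) (∏ j, Pu d u j ^ x j), mul_assoc, ← map_mul,
    mul_comm, coeff_C_mul]
  rw [QK_eq, QK_eq]
  ring

lemma term_coeff₂ (k n m : Fin d → ℕ) :
    coeff (Finsupp.equivFunOnFinite.symm m) (coeff (Finsupp.equivFunOnFinite.symm n)
        ((Nat.multinomial Finset.univ k : MvPolynomial (Fin d) (MvPolynomial (Fin d) ℝ))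
          * ∏ l, (if l = 0 then 1 else X l * C (X l) * C (C (a l))) ^ k l))
      = (Nat.multinomial Finset.univ k : ℝ)
          * ((if msum d k = Finsupp.equivFunOnFinite.symm n then (1:ℝ) else 0)
            * (if msum d k = Finsupp.equivFunOnFinite.symm m then (1:ℝ) else 0)
            * ∏ l ∈ Finset.univ.erase 0, a l ^ k l) := by
  set MR : MvPolynomial (Fin d) ℝ := ∏ l ∈ Finset.univ.erase 0, X l ^ k l with hMR
  set ck : ℝ := ∏ l ∈ Finset.univ.erase 0, a l ^ k l with hck
  have h2 : ∏ l, ((if l = 0 then 1 else X l * C (X l) * C (C (a l)))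
        : MvPolynomial (Fin d) (MvPolynomial (Fin d) ℝ)) ^ k l
      = C (MR * C ck) * map (C : ℝ →+* MvPolynomial (Fin d) ℝ) MR := by
    rw [← Finset.mul_prod_erase _ _ (Finset.mem_univ (0 : Fin d)), if_pos rfl, one_pow, one_mul,
      Finset.prod_congr rfl (fun l hl => by rw [if_neg (Finset.ne_of_mem_erase hl)])]
    simp only [hMR, hck, mul_pow, Finset.prod_mul_distrib, map_mul, map_prod, map_pow, map_X]
    ring
  rw [h2, ← nsmul_eq_mul, coeff_smul, coeff_C_mul, coeff_map, coeff_smul]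
  rw [hMR, prod_X_pow, coeff_monomial, ← msum]
  have hco : ∀ (s t : Fin d →₀ ℕ), coeff t ((monomial s (1:ℝ) * C ck) * C 1)
      = if s = t then ck else 0 := by
    intro s t
    rw [show (C 1 : MvPolynomial (Fin d) ℝ) = 1 from map_one C, mul_one, mul_comm, coeff_C_mul,
      coeff_monomial]
    split_ifs <;> simp
  split_ifs with h1 h2 h2
  · rw [hco, if_pos h2, nsmul_eq_mul]; ring
  · rw [hco, if_neg h2, smul_zero]; ring
  · rw [show (C 0 : MvPolynomial (Fin d) ℝ) = 0 from map_zero C, mul_zero, coeff_zero, smul_zero]; ring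
  · rw [show (C 0 : MvPolynomial (Fin d) ℝ) = 0 from map_zero C, mul_zero, coeff_zero, smul_zero]; ring

lemma primal (hu0 : ∀ j, u 0 j = 1) (hpsum : ∑ j, p j = 1)
    (horth : ∀ l m, ∑ i, u l i * u m i * p i = if l = m then a l else 0)
    (N : ℕ) (n m : Fin d → ℕ) (hn0 : n 0 = 0) (hm0 : m 0 = 0) (hnN : ∑ j, n j ≤ N) :
    ∑ x ∈ piAntidiag univ N, multinomialPMF d p x * (QK d u n x * QK d u m x)
      = if n = m then
          (Nat.multinomial Finset.univ (fun j => if j = 0 then N - ∑ i, n i else n j) : ℝ)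
            * ∏ l ∈ Finset.univ.erase 0, a l ^ n l
        else 0 := by
  have hL : coeff (Finsupp.equivFunOnFinite.symm m) (coeff (Finsupp.equivFunOnFinite.symm n)
        ((∑ j, C (C (p j)) * Gj d u j) ^ N))
      = ∑ x ∈ piAntidiag univ N, multinomialPMF d p x * (QK d u n x * QK d u m x) := by
    rw [Finset.sum_pow_eq_sum_piAntidiag, coeff_sum, coeff_sum]
    refine Finset.sum_congr rfl fun x hx => ?_
    rw [← nsmul_eq_mul, coeff_smul, coeff_smul, term_coeff, nsmul_eq_mul, multinomialPMF]
    ring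
  have hR : coeff (Finsupp.equivFunOnFinite.symm m) (coeff (Finsupp.equivFunOnFinite.symm n)
        ((∑ l, ((if l = 0 then 1 else X l * C (X l) * C (C (a l)))
          : MvPolynomial (Fin d) (MvPolynomial (Fin d) ℝ))) ^ N))
      = if n = m then
          (Nat.multinomial Finset.univ (fun j => if j = 0 then N - ∑ i, n i else n j) : ℝ)
            * ∏ l ∈ Finset.univ.erase 0, a l ^ n l
        else 0 := by
    rw [Finset.sum_pow_eq_sum_piAntidiag, coeff_sum, coeff_sum]
    have hterm := term_coeff₂ d a
    simp_rw [hterm]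
    set k₀ : Fin d → ℕ := fun j => if j = 0 then N - ∑ i, n i else n j with hk₀
    by_cases hnm : n = m
    · subst hnm
      rw [if_pos rfl]
      rw [Finset.sum_eq_single k₀]
      · have hmatch : msum d k₀ = Finsupp.equivFunOnFinite.symm n := by
          refine ((match_iff n k₀ hn0).2 ?_).symm
          intro l hl
          simp only [hk₀, if_neg (Finset.ne_of_mem_erase hl)]
        rw [if_pos hmatch, one_mul, one_mul]
        congr 1
        refine Finset.prod_congr rfl fun l hl => ?_
        rw [hk₀]
        simp only [if_neg (Finset.ne_of_mem_erase hl)]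
      · intro k hk hkne
        rcases Finset.mem_piAntidiag.1 hk with ⟨hksum, -⟩
        by_cases hmk : msum d k = Finsupp.equivFunOnFinite.symm n
        · exfalso
          apply hkne
          have hkE : ∀ l ∈ Finset.univ.erase (0 : Fin d), n l = k l :=
            (match_iff n k hn0).1 hmk.symm
          have hsumE : ∑ l ∈ Finset.univ.erase (0 : Fin d), k l = ∑ i, n i := by
            rw [← sum_erase_eq n hn0]
            exact (Finset.sum_congr rfl hkE).symm
          have hk0 : k 0 + ∑ i, n i = N := by
            rw [← hsumE, ← hksum, ← Finset.sum_erase_add _ _ (Finset.mem_univ (0 : Fin d))]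
            ring
          funext j
          by_cases hj : j = 0
          · subst hj; simp only [hk₀, if_true, eq_self_iff_true]; omega
          · simp only [hk₀, if_neg hj]
            exact (hkE j (Finset.mem_erase.2 ⟨hj, Finset.mem_univ j⟩)).symm
        · rw [if_neg hmk]; ring
      · intro hk₀mem
        exfalso
        apply hk₀mem
        rw [Finset.mem_piAntidiag]
        refine ⟨?_, fun i _ => Finset.mem_univ i⟩
        rw [← Finset.sum_erase_add _ _ (Finset.mem_univ (0 : Fin d))]
        simp only [hk₀]
        have h1 : ∑ l ∈ Finset.univ.erase (0 : Fin d),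
            (if l = 0 then N - ∑ i, n i else n l) = ∑ i, n i := by
          rw [← sum_erase_eq n hn0]
          exact Finset.sum_congr rfl fun l hl => by
            simp only [if_neg (Finset.ne_of_mem_erase hl)]
        simp only [h1, eq_self_iff_true, if_true]
        omega
    · rw [if_neg hnm]
      refine Finset.sum_eq_zero fun k hk => ?_
      by_cases h1 : msum d k = Finsupp.equivFunOnFinite.symm n
      · by_cases h2 : msum d k = Finsupp.equivFunOnFinite.symm m
        · exfalso
          apply hnm
          have hkn := (match_iff n k hn0).1 h1.symm
          have hkm := (match_iff m k hm0).1 h2.symm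
          funext j
          by_cases hj : j = 0
          · subst hj; rw [hn0, hm0]
          · have hjE : j ∈ Finset.univ.erase (0 : Fin d) :=
              Finset.mem_erase.2 ⟨hj, Finset.mem_univ j⟩
            rw [hkn j hjE, hkm j hjE]
        · rw [if_neg h2]; ring
      · rw [if_neg h1]; ring
  rw [← hL, base_eq d u p a hu0 hpsum horth, hR]

section Dual

variable {d : ℕ} [NeZero d]

/-- zero out the 0-th coordinate -/
def nz (z : Fin d → ℕ) : Fin d → ℕ := fun j => if j = 0 then 0 else z j

lemma nz_zero (z : Fin d → ℕ) : nz z 0 = 0 := if_pos rfl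

lemma sum_nz (z : Fin d → ℕ) :
    ∑ j, nz z j = ∑ l ∈ Finset.univ.erase (0 : Fin d), z l := by
  rw [← sum_erase_eq (nz z) (nz_zero z)]
  exact Finset.sum_congr rfl fun l hl => by
    rw [nz, if_neg (Finset.ne_of_mem_erase hl)]

lemma sum_nz_le {N : ℕ} (z : Fin d → ℕ) (hz : ∑ j, z j = N) : ∑ j, nz z j ≤ N := by
  rw [sum_nz, ← hz, ← Finset.sum_erase_add _ _ (Finset.mem_univ (0 : Fin d))]
  omega

lemma nz_inj {N : ℕ} (z z' : Fin d → ℕ) (hz : ∑ j, z j = N) (hz' : ∑ j, z' j = N)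
    (h : nz z = nz z') : z = z' := by
  have hE : ∀ l ∈ Finset.univ.erase (0 : Fin d), z l = z' l := by
    intro l hl
    have := congrFun h l
    rwa [nz, nz, if_neg (Finset.ne_of_mem_erase hl), if_neg (Finset.ne_of_mem_erase hl)] at this
  have hzsum : ∑ l ∈ Finset.univ.erase (0 : Fin d), z l
      = ∑ l ∈ Finset.univ.erase (0 : Fin d), z' l := Finset.sum_congr rfl hE
  have h1 := Finset.sum_erase_add Finset.univ z (Finset.mem_univ (0 : Fin d))
  have h2 := Finset.sum_erase_add Finset.univ z' (Finset.mem_univ (0 : Fin d))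
  funext j
  by_cases hj : j = 0
  · subst hj; omega
  · exact hE j (Finset.mem_erase.2 ⟨hj, Finset.mem_univ j⟩)

variable (d) in
/-- normalization constant -/
noncomputable def cC (N : ℕ) (a : Fin d → ℝ) (z : Fin d → ℕ) : ℝ :=
  (Nat.multinomial Finset.univ
      (fun j => if j = 0 then N - ∑ i, nz z i else nz z j) : ℝ)
    * ∏ l ∈ Finset.univ.erase 0, a l ^ nz z l

lemma multinomialPMF_pos (p : Fin d → ℝ) (hp : ∀ j, 0 < p j) (x : Fin d → ℕ) :
    0 < multinomialPMF d p x := by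
  refine mul_pos ?_ (Finset.prod_pos fun j _ => pow_pos (hp j) _)
  exact_mod_cast Nat.multinomial_pos _ _

lemma cC_pos (N : ℕ) (a : Fin d → ℝ) (ha : ∀ l, 0 < a l) (z : Fin d → ℕ) :
    0 < cC d N a z := by
  refine mul_pos ?_ (Finset.prod_pos fun l _ => pow_pos (ha l) _)
  exact_mod_cast Nat.multinomial_pos _ _

variable (u : Fin d → Fin d → ℝ) (p a : Fin d → ℝ)

lemma dual (hu0 : ∀ j, u 0 j = 1) (hp : ∀ j, 0 < p j) (hpsum : ∑ j, p j = 1)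
    (ha : ∀ l, 0 < a l)
    (horth : ∀ l m, ∑ i, u l i * u m i * p i = if l = m then a l else 0)
    (N : ℕ) (x y : Fin d → ℕ) (hx : ∑ j, x j = N) (hy : ∑ j, y j = N) :
    (∑ z ∈ piAntidiag (univ : Finset (Fin d)) N,
        (cC d N a z)⁻¹ * (QK d u (nz z) x * QK d u (nz z) y)) * multinomialPMF d p y
      = if x = y then 1 else 0 := by
  classical
  set A : Finset (Fin d → ℕ) := piAntidiag (univ : Finset (Fin d)) N with hA
  let ι := {w : Fin d → ℕ // w ∈ A}
  let K : Matrix ι ι ℝ := Matrix.of fun w z => QK d u (nz (z : Fin d → ℕ)) w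
  let Dm : Matrix ι ι ℝ := Matrix.diagonal fun w : ι => multinomialPMF d p w
  let Cd : Matrix ι ι ℝ := Matrix.diagonal fun z : ι => cC d N a z
  have hmemA : ∀ w : Fin d → ℕ, w ∈ A ↔ ∑ j, w j = N := by
    intro w
    rw [hA, Finset.mem_piAntidiag]
    exact ⟨fun h => h.1, fun h => ⟨h, fun i _ => Finset.mem_univ i⟩⟩
  have hprimal : K.transpose * (Dm * K) = Cd := by
    ext z z'
    have hz := (hmemA z).1 z.2
    have hz' := (hmemA z').1 z'.2
    rw [Matrix.mul_apply]
    simp only [K, Dm, Matrix.transpose_apply, Matrix.diagonal_mul, Matrix.of_apply]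
    have : ∑ w : ι, QK d u (nz (z : Fin d → ℕ)) w
          * (multinomialPMF d p w * QK d u (nz (z' : Fin d → ℕ)) w)
        = ∑ w ∈ A, multinomialPMF d p w
            * (QK d u (nz (z : Fin d → ℕ)) w * QK d u (nz (z' : Fin d → ℕ)) w) := by
      rw [← Finset.sum_coe_sort A]
      exact Finset.sum_congr rfl fun w _ => by ring
    rw [this, primal d u p a hu0 hpsum horth N _ _ (nz_zero _) (nz_zero _) (sum_nz_le _ hz)]
    simp only [Cd]
    rw [Matrix.diagonal_apply]
    by_cases hzz : z = z'
    · subst hzz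
      rw [if_pos rfl, if_pos rfl, cC]
    · rw [if_neg ?_, if_neg hzz]
      intro hcon
      exact hzz (Subtype.ext (nz_inj _ _ hz hz' hcon))
  have hBK : (Matrix.diagonal fun z : ι => (cC d N a z)⁻¹) * (K.transpose * Dm) * K = 1 := by
    rw [Matrix.mul_assoc, Matrix.mul_assoc, hprimal]
    simp only [Cd]
    rw [Matrix.diagonal_mul_diagonal]
    rw [show (fun z : ι => (cC d N a z)⁻¹ * cC d N a z) = fun _ => 1 from
      funext fun z => inv_mul_cancel₀ (ne_of_gt (cC_pos N a ha _))]
    exact Matrix.diagonal_one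
  have hKB := mul_eq_one_comm.mp hBK
  have hxA : x ∈ A := (hmemA x).2 hx
  have hyA : y ∈ A := (hmemA y).2 hy
  have hentry : (K * ((Matrix.diagonal fun z : ι => (cC d N a z)⁻¹) * (K.transpose * Dm)))
        ⟨x, hxA⟩ ⟨y, hyA⟩ = (1 : Matrix ι ι ℝ) ⟨x, hxA⟩ ⟨y, hyA⟩ := by rw [hKB]
  rw [Matrix.mul_apply, Matrix.one_apply] at hentry
  have hconv : ∑ z : ι,
        K ⟨x, hxA⟩ z * ((Matrix.diagonal fun z : ι => (cC d N a z)⁻¹) * (K.transpose * Dm)) z ⟨y, hyA⟩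
      = (∑ z ∈ A, (cC d N a z)⁻¹ * (QK d u (nz z) x * QK d u (nz z) y)) * multinomialPMF d p y := by
    rw [Finset.sum_mul, ← Finset.sum_coe_sort A]
    refine Finset.sum_congr rfl fun z _ => ?_
    rw [Matrix.diagonal_mul, Matrix.mul_diagonal]
    simp only [K, Dm, Matrix.of_apply, Matrix.transpose_apply]
    ring
  rw [hconv] at hentry
  rw [hentry]
  simp only [Subtype.mk_eq_mk]

end Dual

end MKDual

/-- Dual orthogonality of the multivariate Krawtchouk polynomials:
`∑_{n : |n| ≤ N} multinomial(N;n⁺)⁻¹ ∏ a_j^{-n_j} Q_n(x;u) Q_n(y;u) = δ_{xy} m(x;p)⁻¹`. -/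
theorem multivariate_krawtchouk_dual_orthogonality
    (d N : ℕ) [NeZero d] (hd : 2 ≤ d)
    (p : Fin d → ℝ) (hp : ∀ j, 0 < p j) (hpsum : ∑ j, p j = 1)
    (u : Fin d → Fin d → ℝ) (hu0 : ∀ j, u 0 j = 1)
    (a : Fin d → ℝ) (ha : ∀ l, 0 < a l)
    (horth : ∀ l m, ∑ i, u l i * u m i * p i = if l = m then a l else 0)
    (x y : Fin d → ℕ) (hx : ∑ j, x j = N) (hy : ∑ j, y j = N) :
    ∑ M ∈ Finset.range (N + 1),
        ∑ n ∈ (Finset.Nat.antidiagonalTuple d M).filter (fun n => n 0 = 0),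
          ((Nat.multinomial Finset.univ
              (fun j => if j = 0 then N - ∑ i, n i else n j) : ℝ))⁻¹ *
            (∏ j ∈ Finset.univ.erase 0, a j ^ n j)⁻¹ * QK d u n x * QK d u n y =
      if x = y then (multinomialPMF d p x)⁻¹ else 0 := by
  classical
  have hdisj : (↑(Finset.range (N + 1)) : Set ℕ).PairwiseDisjoint
      (fun M => (Finset.Nat.antidiagonalTuple d M).filter (fun n => n 0 = 0)) := by
    intro M₁ _ M₂ _ hne
    rw [Function.onFun, Finset.disjoint_left]
    intro n h1 h2
    rw [Finset.mem_filter, Finset.Nat.mem_antidiagonalTuple] at h1 h2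
    exact hne (h1.1.symm.trans h2.1)
  rw [← Finset.sum_biUnion hdisj]
  have himg : (Finset.range (N + 1)).biUnion
        (fun M => (Finset.Nat.antidiagonalTuple d M).filter (fun n => n 0 = 0))
      = (Finset.piAntidiag (Finset.univ : Finset (Fin d)) N).image MKDual.nz := by
    ext n
    rw [Finset.mem_biUnion, Finset.mem_image]
    constructor
    · rintro ⟨M, hM, hn⟩
      rw [Finset.mem_filter, Finset.Nat.mem_antidiagonalTuple] at hn
      rw [Finset.mem_range] at hM
      refine ⟨fun j => if j = 0 then N - ∑ i, n i else n j, ?_, ?_⟩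
      · rw [Finset.mem_piAntidiag]
        refine ⟨?_, fun i _ => Finset.mem_univ i⟩
        rw [← Finset.sum_erase_add _ _ (Finset.mem_univ (0 : Fin d))]
        have hE : ∑ l ∈ Finset.univ.erase (0 : Fin d),
            (if l = 0 then N - ∑ i, n i else n l) = ∑ i, n i := by
          rw [← MKDual.sum_erase_eq n hn.2]
          exact Finset.sum_congr rfl fun l hl => by rw [if_neg (Finset.ne_of_mem_erase hl)]
        rw [hE]
        simp only [eq_self_iff_true, if_true]
        omega
      · funext j
        by_cases hj : j = 0
        · subst hj
          simp only [MKDual.nz, eq_self_iff_true, if_true]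
          exact hn.2.symm
        · simp only [MKDual.nz, if_neg hj]
    · rintro ⟨z, hz, rfl⟩
      have hzs : ∑ j, z j = N := (Finset.mem_piAntidiag.1 hz).1
      refine ⟨∑ j, MKDual.nz z j,
        Finset.mem_range.2 (Nat.lt_succ_of_le (MKDual.sum_nz_le z hzs)), ?_⟩
      rw [Finset.mem_filter, Finset.Nat.mem_antidiagonalTuple]
      exact ⟨rfl, MKDual.nz_zero z⟩
  rw [himg]
  rw [Finset.sum_image (fun z hz z' hz' h => MKDual.nz_inj z z'
    (Finset.mem_piAntidiag.1 hz).1 (Finset.mem_piAntidiag.1 hz').1 h)]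
  have hdual := MKDual.dual u p a hu0 hp hpsum ha horth N x y hx hy
  have hsum_eq : ∑ z ∈ Finset.piAntidiag (Finset.univ : Finset (Fin d)) N,
        ((Nat.multinomial Finset.univ
            (fun j => if j = 0 then N - ∑ i, MKDual.nz z i else MKDual.nz z j) : ℝ))⁻¹ *
          (∏ j ∈ Finset.univ.erase 0, a j ^ MKDual.nz z j)⁻¹
          * QK d u (MKDual.nz z) x * QK d u (MKDual.nz z) y
      = ∑ z ∈ Finset.piAntidiag (Finset.univ : Finset (Fin d)) N,
          (MKDual.cC d N a z)⁻¹ * (QK d u (MKDual.nz z) x * QK d u (MKDual.nz z) y) := by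
    refine Finset.sum_congr rfl fun z _ => ?_
    rw [MKDual.cC, mul_inv]
    ring
  rw [hsum_eq]
  have hpmfy : multinomialPMF d p y ≠ 0 := ne_of_gt (MKDual.multinomialPMF_pos p hp y)
  by_cases hxy : x = y
  · subst hxy
    rw [if_pos rfl]
    rw [if_pos rfl] at hdual
    refine mul_right_cancel₀ hpmfy ?_
    rw [hdual, inv_mul_cancel₀ hpmfy]
  · rw [if_neg hxy]
    rw [if_neg hxy] at hdual
    exact (mul_eq_zero.1 hdual).resolve_right hpmfy
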